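/- Let α ∈ (0, π/2) and s, t ∈ (0,1). If (1+t²)/(1-t²) + (cos α / sin α) · ((1-s²)/(2s)) · (2t/(1-t²)) = 1/sin α, then t = (cos α / (1 + sin α)) · s. -/

import Mathlib

theorem stmt1 (α s t : ℝ) (hα0 : 0 < α) (hα : α < Real.pi / 2)
    (hs0 : 0 < s) (hs1 : s < 1) (ht0 : 0 < t) (ht1 : t < 1)
    (heq : (1 + t ^ 2) / (1 - t ^ 2)
        + (Real.cos α / Real.sin α) * ((1 - s ^ 2) / (2 * s)) * (2 * t / (1 - t ^ 2))
        = 1 / Real.sin α) :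
    t = (Real.cos α / (1 + Real.sin α)) * s := by
  have hS : 0 < Real.sin α := Real.sin_pos_of_pos_of_lt_pi hα0 (by linarith [Real.pi_gt_three])
  have hc : 0 < Real.cos α := Real.cos_pos_of_mem_Ioo ⟨by linarith [Real.pi_pos], hα⟩
  have hsq : Real.cos α ^ 2 = 1 - Real.sin α ^ 2 := by
    have := Real.sin_sq_add_cos_sq α; nlinarith
  have hS1 : Real.sin α < 1 := by nlinarith
  have ht2 : (1 : ℝ) - t ^ 2 ≠ 0 := by nlinarith
  have ht2' : (0:ℝ) < 1 - t ^ 2 := by nlinarith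
  have hs' : s ≠ 0 := ne_of_gt hs0
  have hS' : Real.sin α ≠ 0 := ne_of_gt hS
  set S := Real.sin α
  set c := Real.cos α
  field_simp at heq
  have key' : 2 * S * (1 - t ^ 2) * (((1 + S) * t - c * s) * (c * s * t + (1 - S))) = 0 := by
    linear_combination 2 * S * (1 - t ^ 2) * (c * heq - t * hsq)
  have key : ((1 + S) * t - c * s) * (c * s * t + (1 - S)) = 0 := by
    have h2 : (2 * S * (1 - t ^ 2)) ≠ 0 := by positivity
    exact (mul_eq_zero.mp key').resolve_left h2
  have hpos : 0 < c * s * t + (1 - S) := by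
    have : (0:ℝ) < 1 - S := by linarith
    positivity
  have h1 : (1 + S) * t - c * s = 0 :=
    (mul_eq_zero.mp key).resolve_right (ne_of_gt hpos)
  have h1S : (1 + S) ≠ 0 := by positivity
  field_simp
  linarith
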